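/- Define the Riemann function R(X,Y;x,y) = (1/2πi)∮_{−β₁} (β₂−β₁)/((z+β₁)(z+β₂)) · exp[(β₁−β₂)(−(X−x)·z/(z+β₂) + (Y−y)·z/(z+β₁))] dz, where the contour positively encircles −β₁ but not −β₂. Then R satisfies: (1) R_{XY} + β₁R_Y + β₂R_X = 0; (2) (R_X + β₁R)|_{Y=y} = 0 and (R_x − β₁R)|_{Y=y} = 0; (3) (R_Y + β₂R)|_{X=x} = 0 and (R_y − β₂R)|_{X=x} = 0; (4) R(X,Y;X,Y) = 1. -/

import Mathlib

open Complex
open Real MeasureTheory intervalIntegral Metric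

/-- Differentiation under the integral sign for integrands of the form `w θ * exp (c θ * u + d θ)`,
which are linear-exponential in the parameter `u`. -/
lemma hasDerivAt_paramExp (c d w : ℝ → ℂ) (hc : Continuous c) (hd : Continuous d)
    (hw : Continuous w) (u₀ : ℝ) :
    HasDerivAt (fun u : ℝ => ∫ θ in (0:ℝ)..(2*π), w θ * Complex.exp (c θ * u + d θ))
      (∫ θ in (0:ℝ)..(2*π), c θ * w θ * Complex.exp (c θ * u₀ + d θ)) u₀ := by
  have hcont : Continuous fun p : ℝ × ℝ => c p.2 * w p.2 * Complex.exp (c p.2 * p.1 + d p.2) := by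
    fun_prop
  obtain ⟨C, hC⟩ := (isCompact_Icc (a := u₀ - 1) (b := u₀ + 1)).prod
    (isCompact_Icc (a := (0:ℝ)) (b := 2*π)) |>.exists_bound_of_continuousOn hcont.continuousOn
  have key := intervalIntegral.hasDerivAt_integral_of_dominated_loc_of_deriv_le
    (F := fun (u:ℝ) θ => w θ * Complex.exp (c θ * (u:ℂ) + d θ))
    (F' := fun (u:ℝ) θ => c θ * w θ * Complex.exp (c θ * (u:ℂ) + d θ))
    (x₀ := u₀) (a := 0) (b := 2*π) (μ := volume) (bound := fun _ => C)
    (s := Metric.ball u₀ 1) (Metric.ball_mem_nhds u₀ one_pos)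
    ?_ ?_ ?_ ?_ ?_ ?_
  · exact key.2
  · filter_upwards with u
    exact (by fun_prop : Continuous fun θ => w θ * Complex.exp (c θ * u + d θ)).aestronglyMeasurable
  · exact (by fun_prop : Continuous fun θ => w θ * Complex.exp (c θ * u₀ + d θ)).intervalIntegrable _ _
  · exact (by fun_prop : Continuous fun θ => c θ * w θ * Complex.exp (c θ * u₀ + d θ)).aestronglyMeasurable
  · filter_upwards with θ hθ u hu
    refine hC (u, θ) ⟨?_, ?_⟩
    · have := abs_lt.mp (mem_ball_iff_norm.mp hu |>.trans_le le_rfl)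
      constructor <;> [linarith [this.1]; linarith [this.2]]
    · rw [Set.uIoc_of_le (by positivity)] at hθ
      exact ⟨hθ.1.le, hθ.2⟩
  · exact intervalIntegrable_const
  · filter_upwards with θ hθ u hu
    have h1 : HasDerivAt (fun u : ℝ => c θ * (u:ℂ) + d θ) (c θ) u := by
      have h0 : HasDerivAt (fun z : ℂ => c θ * z + d θ) (c θ) (u:ℂ) := by
        simpa using ((hasDerivAt_id (u:ℂ)).const_mul (c θ)).add_const (d θ)
      exact h0.comp_ofReal
    have := (Complex.hasDerivAt_exp _).comp u h1 |>.const_mul (w θ)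
    refine this.congr_deriv ?_
    ring


/-- The Riemann function of the telegraph operator, defined as a contour integral over a
positively oriented circle around `-β₁` (of radius `|β₁-β₂|/2`, so that `-β₂` is outside). -/
noncomputable def RiemannF (b1 b2 : ℝ) (X Y x y : ℝ) : ℂ :=
  (2 * Real.pi * Complex.I)⁻¹ *
    ∮ z in C((-b1 : ℂ), |b1 - b2| / 2),
      ((b2 : ℂ) - (b1 : ℂ)) / ((z + (b1 : ℂ)) * (z + (b2 : ℂ))) *
        Complex.exp (((b1 : ℂ) - (b2 : ℂ)) *
          (-((X : ℂ) - (x : ℂ)) * z / (z + (b2 : ℂ)) + ((Y : ℂ) - (y : ℂ)) * z / (z + (b1 : ℂ))))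

namespace RiemannAux

variable (b1 b2 : ℝ)

noncomputable def rr : ℝ := |b1 - b2| / 2
noncomputable def zc (θ : ℝ) : ℂ := circleMap (-b1) (rr b1 b2) θ
noncomputable def zd (θ : ℝ) : ℂ := circleMap 0 (rr b1 b2) θ * Complex.I
noncomputable def Af (θ : ℝ) : ℂ := ((b2:ℂ) - b1) * zc b1 b2 θ / (zc b1 b2 θ + b2)
noncomputable def Bf (θ : ℝ) : ℂ := ((b1:ℂ) - b2) * zc b1 b2 θ / (zc b1 b2 θ + b1)
noncomputable def Wf (θ : ℝ) : ℂ :=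
  zd b1 b2 θ * (((b2:ℂ) - b1) / ((zc b1 b2 θ + b1) * (zc b1 b2 θ + b2)))

noncomputable def Jint (w : ℝ → ℂ) (s t : ℝ) : ℂ :=
  ∫ θ in (0:ℝ)..(2*π), w θ * Complex.exp (Af b1 b2 θ * s + Bf b1 b2 θ * t)

variable {b1 b2}
variable (hne : b1 ≠ b2)
include hne

lemma hr : 0 < rr b1 b2 := by
  have : b1 - b2 ≠ 0 := sub_ne_zero.mpr hne
  simp only [rr]
  positivity

lemma abs_zc (θ : ℝ) : ‖zc b1 b2 θ + b1‖ = rr b1 b2 := by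
  have h0 : zc b1 b2 θ + b1 = circleMap 0 (rr b1 b2) θ := by
    rw [zc, ← circleMap_sub_center, sub_neg_eq_add]
  rw [h0, norm_circleMap_zero, abs_of_pos (hr hne)]

lemma hz1 (θ : ℝ) : zc b1 b2 θ + b1 ≠ 0 := by
  intro h
  have := abs_zc hne θ
  rw [h] at this
  simp at this
  exact absurd this.symm (ne_of_gt (hr hne))

lemma hz2 (θ : ℝ) : zc b1 b2 θ + b2 ≠ 0 := by
  intro h
  have hz : zc b1 b2 θ = -b2 := by linear_combination h
  have := abs_zc hne θ
  rw [hz] at this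
  have h2 : (-(b2:ℂ) + b1) = ((b1 - b2 : ℝ) : ℂ) := by push_cast; ring
  rw [h2, Complex.norm_real, Real.norm_eq_abs] at this
  rw [rr] at this
  have : |b1 - b2| = 0 := by linarith
  exact hne (by linarith [abs_eq_zero.mp this, sub_eq_zero.mp (abs_eq_zero.mp this)])

omit hne in lemma cont_zc : Continuous (zc b1 b2) := continuous_circleMap _ _
omit hne in lemma cont_zd : Continuous (zd b1 b2) := (continuous_circleMap _ _).mul continuous_const

lemma cont_Af : Continuous (Af b1 b2) :=
  (continuous_const.mul cont_zc).div (cont_zc.add continuous_const) (hz2 hne)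

lemma cont_Bf : Continuous (Bf b1 b2) :=
  (continuous_const.mul cont_zc).div (cont_zc.add continuous_const) (hz1 hne)

lemma cont_Wf : Continuous (Wf b1 b2) :=
  cont_zd.mul (continuous_const.div
    ((cont_zc.add continuous_const).mul (cont_zc.add continuous_const))
    (fun θ => mul_ne_zero (hz1 hne θ) (hz2 hne θ)))


lemma RiemannF_eq (X Y x y : ℝ) :
    RiemannF b1 b2 X Y x y
      = (2 * Real.pi * Complex.I)⁻¹ * Jint b1 b2 (Wf b1 b2) (X - x) (Y - y) := by
  rw [RiemannF, Jint]
  congr 1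
  rw [circleIntegral]
  refine intervalIntegral.integral_congr fun θ _ => ?_
  have h1 := hz1 hne θ
  have h2 := hz2 hne θ
  have hexp : ((b1:ℂ) - b2) * (-((X:ℂ) - x) * zc b1 b2 θ / (zc b1 b2 θ + b2)
        + ((Y:ℂ) - y) * zc b1 b2 θ / (zc b1 b2 θ + b1))
      = Af b1 b2 θ * ((X - x : ℝ) : ℂ) + Bf b1 b2 θ * ((Y - y : ℝ) : ℂ) := by
    rw [Af, Bf]
    push_cast
    field_simp
    ring
  show deriv (circleMap (-b1) (rr b1 b2)) θ • (((b2:ℂ) - b1) / ((zc b1 b2 θ + b1) * (zc b1 b2 θ + b2)) *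
      Complex.exp (((b1:ℂ) - b2) * (-((X:ℂ) - x) * zc b1 b2 θ / (zc b1 b2 θ + b2)
        + ((Y:ℂ) - y) * zc b1 b2 θ / (zc b1 b2 θ + b1))))
    = Wf b1 b2 θ * Complex.exp (Af b1 b2 θ * ((X - x : ℝ) : ℂ) + Bf b1 b2 θ * ((Y - y : ℝ) : ℂ))
  rw [hexp, deriv_circleMap, smul_eq_mul, Wf, zd]
  ring

lemma hasDerivAt_Jint_s (w : ℝ → ℂ) (hw : Continuous w) (s t : ℝ) :
    HasDerivAt (fun s' => Jint b1 b2 w s' t)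
      (Jint b1 b2 (fun θ => Af b1 b2 θ * w θ) s t) s := by
  unfold Jint
  exact hasDerivAt_paramExp (Af b1 b2) (fun θ => Bf b1 b2 θ * ((t:ℝ):ℂ)) w (cont_Af hne)
    ((cont_Bf hne).mul continuous_const) hw s

omit hne in lemma Jint_swap (w : ℝ → ℂ) (s t : ℝ) :
    Jint b1 b2 w s t = ∫ θ in (0:ℝ)..(2*π), w θ * Complex.exp (Bf b1 b2 θ * t + Af b1 b2 θ * s) := by
  unfold Jint
  exact intervalIntegral.integral_congr fun θ _ => by rw [add_comm]

lemma hasDerivAt_Jint_t (w : ℝ → ℂ) (hw : Continuous w) (s t : ℝ) :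
    HasDerivAt (fun t' => Jint b1 b2 w s t')
      (Jint b1 b2 (fun θ => Bf b1 b2 θ * w θ) s t) t := by
  have h := hasDerivAt_paramExp (Bf b1 b2) (fun θ => Af b1 b2 θ * ((s:ℝ):ℂ)) w (cont_Bf hne)
    ((cont_Af hne).mul continuous_const) hw t
  simp only [← Jint_swap] at h
  exact h

lemma hasDerivAt_R_X (w : ℝ → ℂ) (hw : Continuous w) (s : ℝ) (t : ℝ) (x : ℝ) :
    HasDerivAt (fun X' : ℝ => Jint b1 b2 w (X' - x) t)
      (Jint b1 b2 (fun θ => Af b1 b2 θ * w θ) (s - x) t) s := by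
  have hin : HasDerivAt (fun X' : ℝ => X' - x) 1 s := (hasDerivAt_id s).sub_const x
  have := (hasDerivAt_Jint_s hne w hw (s - x) t).scomp s hin
  simpa [Function.comp_def] using this

lemma hasDerivAt_R_Y (w : ℝ → ℂ) (hw : Continuous w) (s : ℝ) (t : ℝ) (y : ℝ) :
    HasDerivAt (fun Y' : ℝ => Jint b1 b2 w s (Y' - y))
      (Jint b1 b2 (fun θ => Bf b1 b2 θ * w θ) s (t - y)) t := by
  have hin : HasDerivAt (fun Y' : ℝ => Y' - y) 1 t := (hasDerivAt_id t).sub_const y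
  have := (hasDerivAt_Jint_t hne w hw s (t - y)).scomp t hin
  simpa [Function.comp_def] using this

lemma hasDerivAt_R_x (w : ℝ → ℂ) (hw : Continuous w) (X : ℝ) (t : ℝ) (x : ℝ) :
    HasDerivAt (fun x' : ℝ => Jint b1 b2 w (X - x') t)
      (-Jint b1 b2 (fun θ => Af b1 b2 θ * w θ) (X - x) t) x := by
  have hin : HasDerivAt (fun x' : ℝ => X - x') (-1) x := by
    simpa using (hasDerivAt_id x).const_sub X
  have := (hasDerivAt_Jint_s hne w hw (X - x) t).scomp x hin
  simpa [Function.comp_def] using this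

lemma hasDerivAt_R_y (w : ℝ → ℂ) (hw : Continuous w) (s : ℝ) (Y : ℝ) (y : ℝ) :
    HasDerivAt (fun y' : ℝ => Jint b1 b2 w s (Y - y'))
      (-Jint b1 b2 (fun θ => Bf b1 b2 θ * w θ) s (Y - y)) y := by
  have hin : HasDerivAt (fun y' : ℝ => Y - y') (-1) y := by
    simpa using (hasDerivAt_id y).const_sub Y
  have := (hasDerivAt_Jint_t hne w hw s (Y - y)).scomp y hin
  simpa [Function.comp_def] using this

lemma cont_exp (s t : ℝ) :
    Continuous (fun θ => Complex.exp (Af b1 b2 θ * (s:ℂ) + Bf b1 b2 θ * (t:ℂ))) :=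
  Complex.continuous_exp.comp
    (((cont_Af hne).mul continuous_const).add ((cont_Bf hne).mul continuous_const))

lemma Jint_linear (w1 w2 : ℝ → ℂ) (hw1 : Continuous w1) (hw2 : Continuous w2) (s t : ℝ) :
    Jint b1 b2 (fun θ => w1 θ + w2 θ) s t = Jint b1 b2 w1 s t + Jint b1 b2 w2 s t := by
  unfold Jint
  rw [← intervalIntegral.integral_add
    ((show Continuous (fun θ => w1 θ * Complex.exp (Af b1 b2 θ * (s:ℂ) + Bf b1 b2 θ * (t:ℂ))) from
      hw1.mul (cont_exp hne s t)).intervalIntegrable _ _)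
    ((show Continuous (fun θ => w2 θ * Complex.exp (Af b1 b2 θ * (s:ℂ) + Bf b1 b2 θ * (t:ℂ))) from
      hw2.mul (cont_exp hne s t)).intervalIntegrable _ _)]
  simp only [add_mul]

omit hne in
lemma Jint_const_mul (a : ℂ) (w : ℝ → ℂ) (s t : ℝ) :
    Jint b1 b2 (fun θ => a * w θ) s t = a * Jint b1 b2 w s t := by
  unfold Jint
  rw [← intervalIntegral.integral_const_mul]
  simp only [mul_assoc]

lemma key_pde (θ : ℝ) :
    Af b1 b2 θ * Bf b1 b2 θ + b1 * Bf b1 b2 θ + b2 * Af b1 b2 θ = 0 := by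
  have h1 := hz1 hne θ
  have h2 := hz2 hne θ
  rw [Af, Bf]
  field_simp
  ring

lemma pde_aux (s t : ℝ) :
    Jint b1 b2 (fun θ => Af b1 b2 θ * (Bf b1 b2 θ * Wf b1 b2 θ)) s t
      + (b1:ℂ) * Jint b1 b2 (fun θ => Bf b1 b2 θ * Wf b1 b2 θ) s t
      + (b2:ℂ) * Jint b1 b2 (fun θ => Af b1 b2 θ * Wf b1 b2 θ) s t = 0 := by
  have cBW : Continuous (fun θ => Bf b1 b2 θ * Wf b1 b2 θ) := (cont_Bf hne).mul (cont_Wf hne)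
  have cAW : Continuous (fun θ => Af b1 b2 θ * Wf b1 b2 θ) := (cont_Af hne).mul (cont_Wf hne)
  have cABW : Continuous (fun θ => Af b1 b2 θ * (Bf b1 b2 θ * Wf b1 b2 θ)) := (cont_Af hne).mul cBW
  rw [← Jint_const_mul, ← Jint_const_mul,
    ← Jint_linear hne _ (fun θ => (b1:ℂ) * (Bf b1 b2 θ * Wf b1 b2 θ)) cABW (continuous_const.mul cBW),
    ← Jint_linear hne (fun θ => Af b1 b2 θ * (Bf b1 b2 θ * Wf b1 b2 θ) + (b1:ℂ) * (Bf b1 b2 θ * Wf b1 b2 θ)) (fun θ => (b2:ℂ) * (Af b1 b2 θ * Wf b1 b2 θ)) (cABW.add (continuous_const.mul cBW)) (continuous_const.mul cAW)]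
  have hzero : (fun θ => Af b1 b2 θ * (Bf b1 b2 θ * Wf b1 b2 θ)
      + (b1:ℂ) * (Bf b1 b2 θ * Wf b1 b2 θ) + (b2:ℂ) * (Af b1 b2 θ * Wf b1 b2 θ))
      = fun _ => (0:ℂ) := by
    funext θ
    linear_combination Wf b1 b2 θ * key_pde hne θ
  rw [hzero]
  simp [Jint]

omit hne in lemma two_pi_I_ne : (2 * (Real.pi:ℂ) * Complex.I) ≠ 0 := by
  simp [Real.pi_ne_zero, Complex.I_ne_zero, Complex.ofReal_ne_zero]

lemma R_on_Y_eq (X x y : ℝ) :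
    RiemannF b1 b2 X y x y = Complex.exp (-(b1:ℂ) * ((X:ℂ) - x)) := by
  set f : ℂ → ℂ := fun z => ((b2:ℂ) - b1) / (z + b2) *
    Complex.exp (((b1:ℂ) - b2) * (-((X:ℂ) - x) * z / (z + b2))) with hf
  have hden : ∀ z ∈ Metric.closedBall (-b1:ℂ) (rr b1 b2), z + b2 ≠ 0 := by
    intro z hz h0
    have hz' : z = -b2 := by linear_combination h0
    rw [hz', Metric.mem_closedBall] at hz
    have hd : dist (-(b2:ℂ)) (-(b1:ℂ)) = |b1 - b2| := by
      rw [Complex.dist_eq]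
      have h3 : (-(b2:ℂ) - -(b1:ℂ)) = ((b1 - b2 : ℝ) : ℂ) := by push_cast; ring
      rw [h3, Complex.norm_real, Real.norm_eq_abs]
    rw [hd, rr] at hz
    have h4 : |b1 - b2| = 0 := by
      have := abs_nonneg (b1 - b2); linarith
    exact hne (by linarith [sub_eq_zero.mp (abs_eq_zero.mp h4)])
  have hdiff : DifferentiableOn ℂ f (Metric.closedBall (-b1:ℂ) (rr b1 b2)) := by
    apply DifferentiableOn.mul
    · exact (differentiableOn_const _).div
        ((differentiable_id.add_const _).differentiableOn) hden
    · apply DifferentiableOn.cexp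
      exact (differentiableOn_const _).mul
        (((differentiableOn_const (-((X:ℂ) - x))).mul differentiableOn_id).div
          ((differentiable_id.add_const _).differentiableOn) hden)
  have hc := hdiff.circleIntegral_sub_inv_smul (Metric.mem_ball_self (hr hne))
  have hwe : ∀ z : ℂ, ((b2:ℂ) - b1) / ((z + b1) * (z + b2)) *
      Complex.exp (((b1:ℂ) - b2) * (-((X:ℂ) - x) * z / (z + b2)
        + ((y:ℂ) - y) * z / (z + b1)))
      = (z - -(b1:ℂ))⁻¹ • f z := by
    intro z
    rw [smul_eq_mul, hf]
    rw [show ((y:ℂ) - y) = 0 from sub_self _]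
    rw [zero_mul, zero_div, add_zero, sub_neg_eq_add]
    rw [div_eq_mul_inv, div_eq_mul_inv, mul_inv]
    ring
  rw [RiemannF]
  have hR : |b1 - b2| / 2 = rr b1 b2 := rfl
  rw [hR]
  simp only [hwe]
  rw [hc, smul_eq_mul, ← mul_assoc, inv_mul_cancel₀ two_pi_I_ne, one_mul, hf]
  beta_reduce
  have hb : (-(b1:ℂ) + b2) ≠ 0 := by
    rw [show (-(b1:ℂ) + b2) = ((b2 - b1 : ℝ) : ℂ) by push_cast; ring]
    exact Complex.ofReal_ne_zero.mpr (sub_ne_zero.mpr (Ne.symm hne))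
  rw [show ((b2:ℂ) - b1) / (-(b1:ℂ) + b2) = 1 by
    rw [show (-(b1:ℂ) + b2) = ((b2:ℂ) - b1) by ring]
    exact div_self (by rw [show ((b2:ℂ) - b1) = -(b1:ℂ) + b2 by ring]; exact hb), one_mul]
  congr 1
  field_simp
  ring

lemma sphere_ne (z : ℂ) (hz : z ∈ Metric.sphere (-(b1:ℂ)) (rr b1 b2)) : z + b1 ≠ 0 := by
  intro h0
  have : dist z (-(b1:ℂ)) = rr b1 b2 := hz
  rw [Complex.dist_eq, show z - -(b1:ℂ) = z + b1 from by ring, h0] at this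
  simp at this
  exact absurd this.symm (ne_of_gt (hr hne))

lemma circle_zero (t : ℝ) :
    (∮ z in C((-(b1:ℂ)), rr b1 b2),
      (b1:ℂ) * ((b2:ℂ) - b1) / (z + b1) ^ 2
        * Complex.exp (((b1:ℂ) - b2) * (t:ℂ) * z / (z + b1))) = 0 := by
  by_cases ht : t = 0
  · subst ht
    refine circleIntegral.integral_eq_zero_of_hasDerivWithinAt
      (f := fun z : ℂ => -((b1:ℂ) * ((b2:ℂ) - b1)) / (z + b1)) (hr hne).le fun z hz => ?_
    have hz0 := sphere_ne hne z hz
    have hd : HasDerivAt (fun z : ℂ => -((b1:ℂ) * ((b2:ℂ) - b1)) / (z + b1))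
        ((b1:ℂ) * ((b2:ℂ) - b1) / (z + b1) ^ 2 * Complex.exp (((b1:ℂ) - b2) * ((0:ℝ):ℂ) * z / (z + b1))) z := by
      have := (hasDerivAt_const z (-((b1:ℂ) * ((b2:ℂ) - b1)))).div
        ((hasDerivAt_id z).add_const (b1:ℂ)) hz0
      refine this.congr_deriv ?_
      simp
    exact hd.hasDerivWithinAt
  · have htc : (t:ℂ) ≠ 0 := Complex.ofReal_ne_zero.mpr ht
    refine circleIntegral.integral_eq_zero_of_hasDerivWithinAt
      (f := fun z : ℂ => -(t:ℂ)⁻¹ * Complex.exp (((b1:ℂ) - b2) * (t:ℂ) * z / (z + b1)))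
      (hr hne).le fun z hz => ?_
    have hz0 := sphere_ne hne z hz
    have hu : HasDerivAt (fun z : ℂ => ((b1:ℂ) - b2) * (t:ℂ) * z / (z + b1))
        (((b1:ℂ) - b2) * (t:ℂ) * (b1:ℂ) / (z + b1) ^ 2) z := by
      have := ((hasDerivAt_id z).const_mul (((b1:ℂ) - b2) * (t:ℂ))).div
        ((hasDerivAt_id z).add_const (b1:ℂ)) hz0
      refine this.congr_deriv ?_
      simp only [id]
      field_simp
      ring
    have hd := ((Complex.hasDerivAt_exp _).comp z hu).const_mul (-(t:ℂ)⁻¹)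
    have he : -(t:ℂ)⁻¹ * (Complex.exp (((b1:ℂ) - b2) * (t:ℂ) * z / (z + b1))
          * (((b1:ℂ) - b2) * (t:ℂ) * (b1:ℂ) / (z + b1) ^ 2))
        = (b1:ℂ) * ((b2:ℂ) - b1) / (z + b1) ^ 2
          * Complex.exp (((b1:ℂ) - b2) * (t:ℂ) * z / (z + b1)) := by
      field_simp
      ring
    rw [he] at hd
    exact hd.hasDerivWithinAt

lemma boundary_Y (t : ℝ) :
    Jint b1 b2 (fun θ => Bf b1 b2 θ * Wf b1 b2 θ) 0 t
      + (b2:ℂ) * Jint b1 b2 (Wf b1 b2) 0 t = 0 := by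
  rw [← Jint_const_mul,
    ← Jint_linear hne (fun θ => Bf b1 b2 θ * Wf b1 b2 θ) (fun θ => (b2:ℂ) * Wf b1 b2 θ) ((cont_Bf hne).mul (cont_Wf hne)) (continuous_const.mul (cont_Wf hne))]
  have key : Jint b1 b2 (fun θ => Bf b1 b2 θ * Wf b1 b2 θ + (b2:ℂ) * Wf b1 b2 θ) 0 t
      = ∮ z in C((-(b1:ℂ)), rr b1 b2),
          (b1:ℂ) * ((b2:ℂ) - b1) / (z + b1) ^ 2
            * Complex.exp (((b1:ℂ) - b2) * (t:ℂ) * z / (z + b1)) := by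
    rw [Jint, circleIntegral]
    refine intervalIntegral.integral_congr fun θ _ => ?_
    have h1 := hz1 hne θ
    have h2 := hz2 hne θ
    rw [deriv_circleMap, smul_eq_mul,
      show circleMap (-(b1:ℂ)) (rr b1 b2) = zc b1 b2 from rfl]
    have harg : Af b1 b2 θ * ((0:ℝ):ℂ) + Bf b1 b2 θ * (t:ℂ)
        = ((b1:ℂ) - b2) * (t:ℂ) * zc b1 b2 θ / (zc b1 b2 θ + b1) := by
      rw [Af, Bf]
      push_cast
      field_simp
      ring
    rw [harg]
    have hco : Bf b1 b2 θ * Wf b1 b2 θ + (b2:ℂ) * Wf b1 b2 θ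
        = (circleMap 0 (rr b1 b2) θ * Complex.I)
          * ((b1:ℂ) * ((b2:ℂ) - b1) / (zc b1 b2 θ + b1) ^ 2) := by
      rw [Bf, Wf, zd]
      field_simp
      ring
    rw [hco]
    ring
  rw [key, circle_zero hne]

end RiemannAux


open RiemannAux in
/-- The four characteristic properties of the Riemann function for the telegraph operator
`∂_X∂_Y + β₁∂_Y + β₂∂_X`. -/
theorem stmt_4 (b1 b2 : ℝ) (h1 : 0 < b1) (h2 : 0 < b2) (hne : b1 ≠ b2) :
    (∀ X Y x y : ℝ,
      deriv (fun X' => deriv (fun Y' => RiemannF b1 b2 X' Y' x y) Y) X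
        + (b1 : ℂ) * deriv (fun Y' => RiemannF b1 b2 X Y' x y) Y
        + (b2 : ℂ) * deriv (fun X' => RiemannF b1 b2 X' Y x y) X = 0) ∧
    (∀ X x y : ℝ,
      deriv (fun X' => RiemannF b1 b2 X' y x y) X + (b1 : ℂ) * RiemannF b1 b2 X y x y = 0 ∧
      deriv (fun x' => RiemannF b1 b2 X y x' y) x - (b1 : ℂ) * RiemannF b1 b2 X y x y = 0) ∧
    (∀ Y x y : ℝ,
      deriv (fun Y' => RiemannF b1 b2 x Y' x y) Y + (b2 : ℂ) * RiemannF b1 b2 x Y x y = 0 ∧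
      deriv (fun y' => RiemannF b1 b2 x Y x y') y - (b2 : ℂ) * RiemannF b1 b2 x Y x y = 0) ∧
    (∀ X Y : ℝ, RiemannF b1 b2 X Y X Y = 1) := by

  have hR : ∀ X Y x y : ℝ, RiemannF b1 b2 X Y x y
      = (2 * Real.pi * Complex.I)⁻¹ * Jint b1 b2 (Wf b1 b2) (X - x) (Y - y) :=
    fun X Y x y => RiemannF_eq hne X Y x y
  set c : ℂ := (2 * Real.pi * Complex.I)⁻¹ with hc
  refine ⟨?_, ?_, ?_, ?_⟩
  · -- the PDE
    intro X Y x y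
    have hdY : ∀ X' : ℝ, deriv (fun Y' => RiemannF b1 b2 X' Y' x y) Y
        = c * Jint b1 b2 (fun θ => Bf b1 b2 θ * Wf b1 b2 θ) (X' - x) (Y - y) := by
      intro X'
      have hfun : (fun Y' => RiemannF b1 b2 X' Y' x y)
          = fun Y' => c * Jint b1 b2 (Wf b1 b2) (X' - x) (Y' - y) :=
        funext fun Y' => hR X' Y' x y
      rw [hfun]
      exact ((hasDerivAt_R_Y hne _ (cont_Wf hne) (X' - x) Y y).const_mul c).deriv
    have hdX : deriv (fun X' => RiemannF b1 b2 X' Y x y) X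
        = c * Jint b1 b2 (fun θ => Af b1 b2 θ * Wf b1 b2 θ) (X - x) (Y - y) := by
      have hfun : (fun X' => RiemannF b1 b2 X' Y x y)
          = fun X' => c * Jint b1 b2 (Wf b1 b2) (X' - x) (Y - y) :=
        funext fun X' => hR X' Y x y
      rw [hfun]
      exact ((hasDerivAt_R_X hne _ (cont_Wf hne) X (Y - y) x).const_mul c).deriv
    have hdXY : deriv (fun X' => deriv (fun Y' => RiemannF b1 b2 X' Y' x y) Y) X
        = c * Jint b1 b2 (fun θ => Af b1 b2 θ * (Bf b1 b2 θ * Wf b1 b2 θ)) (X - x) (Y - y) := by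
      have hfun : (fun X' => deriv (fun Y' => RiemannF b1 b2 X' Y' x y) Y)
          = fun X' => c * Jint b1 b2 (fun θ => Bf b1 b2 θ * Wf b1 b2 θ) (X' - x) (Y - y) :=
        funext hdY
      rw [hfun]
      exact ((hasDerivAt_R_X hne _ ((cont_Bf hne).mul (cont_Wf hne)) X (Y - y) x).const_mul
        c).deriv
    rw [hdXY, hdY X, hdX]
    linear_combination c * pde_aux hne (X - x) (Y - y)
  · -- boundary at Y = y
    intro X x y
    have hfun : (fun X' : ℝ => RiemannF b1 b2 X' y x y)
        = fun X' : ℝ => Complex.exp (-(b1:ℂ) * ((X':ℂ) - x)) :=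
      funext fun X' => R_on_Y_eq hne X' x y
    have hfun2 : (fun x' : ℝ => RiemannF b1 b2 X y x' y)
        = fun x' : ℝ => Complex.exp (-(b1:ℂ) * ((X:ℂ) - x')) :=
      funext fun x' => R_on_Y_eq hne X x' y
    constructor
    · rw [hfun, R_on_Y_eq hne X x y]
      have hIn : HasDerivAt (fun X' : ℝ => -(b1:ℂ) * ((X':ℂ) - x)) (-(b1:ℂ)) X := by
        have h0 : HasDerivAt (fun z : ℂ => -(b1:ℂ) * (z - x)) (-(b1:ℂ)) (X:ℂ) := by
          simpa using ((hasDerivAt_id (X:ℂ)).sub_const (x:ℂ)).const_mul (-(b1:ℂ))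
        exact h0.comp_ofReal
      have hd := HasDerivAt.scomp X (Complex.hasDerivAt_exp (-(b1:ℂ) * ((X:ℂ) - x))) hIn
      simp only [Function.comp_def] at hd
      rw [hd.deriv, smul_eq_mul]
      ring
    · rw [hfun2, R_on_Y_eq hne X x y]
      have hIn : HasDerivAt (fun x' : ℝ => -(b1:ℂ) * ((X:ℂ) - x')) (b1:ℂ) x := by
        have h0 : HasDerivAt (fun z : ℂ => -(b1:ℂ) * ((X:ℂ) - z)) (b1:ℂ) (x:ℂ) := by
          have := ((hasDerivAt_id (x:ℂ)).const_sub (X:ℂ)).const_mul (-(b1:ℂ))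
          refine this.congr_deriv ?_
          simp
        exact h0.comp_ofReal
      have hd := HasDerivAt.scomp x (Complex.hasDerivAt_exp (-(b1:ℂ) * ((X:ℂ) - x))) hIn
      simp only [Function.comp_def] at hd
      rw [hd.deriv, smul_eq_mul]
      ring
  · -- boundary at X = x
    intro Y x y
    have e0 : x - x = (0:ℝ) := sub_self x
    have hfunY : (fun Y' : ℝ => RiemannF b1 b2 x Y' x y)
        = fun Y' => c * Jint b1 b2 (Wf b1 b2) 0 (Y' - y) := by
      funext Y'
      rw [hR x Y' x y, e0]
    constructor
    · have hd : deriv (fun Y' => RiemannF b1 b2 x Y' x y) Y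
          = c * Jint b1 b2 (fun θ => Bf b1 b2 θ * Wf b1 b2 θ) 0 (Y - y) := by
        rw [hfunY]
        exact ((hasDerivAt_R_Y hne _ (cont_Wf hne) 0 Y y).const_mul c).deriv
      rw [hd, hR x Y x y, e0]
      linear_combination c * boundary_Y hne (Y - y)
    · have hd : deriv (fun y' => RiemannF b1 b2 x Y x y') y
          = c * -Jint b1 b2 (fun θ => Bf b1 b2 θ * Wf b1 b2 θ) 0 (Y - y) := by
        have hfuny : (fun y' : ℝ => RiemannF b1 b2 x Y x y')
            = fun y' => c * Jint b1 b2 (Wf b1 b2) 0 (Y - y') := by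
          funext y'
          rw [hR x Y x y', e0]
        rw [hfuny]
        exact ((hasDerivAt_R_y hne _ (cont_Wf hne) 0 Y y).const_mul c).deriv
      rw [hd, hR x Y x y, e0]
      linear_combination (-c) * boundary_Y hne (Y - y)
  · -- normalization on the diagonal
    intro X Y
    rw [R_on_Y_eq hne X X Y]
    simp
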